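/- Let X_i = x_i + ε_i/θ for i = 1,...,n, where x_1 > x_2 > ... > x_n are fixed reals, ε_i are i.i.d. with a continuous distribution having a density positive on all of ℝ, and θ > 0. Then the probability that X_1 = max_i X_i is strictly increasing in θ. -/

import Mathlib

open MeasureTheory

private lemma stmt15_cond_iff (θ a b u v : ℝ) (hθ : 0 < θ) :
    a + u / θ ≤ b + v / θ ↔ u - v ≤ θ * (b - a) := by
  constructor
  · intro h
    have h' : u / θ - v / θ ≤ b - a := by linarith
    rw [← sub_div, div_le_iff₀ hθ] at h'
    linarith
  · intro h
    have h' : (u - v) / θ ≤ b - a := by rw [div_le_iff₀ hθ]; linarith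
    rw [sub_div] at h'
    linarith

theorem stmt_15 (n : ℕ) (hn : 2 ≤ n) (x : Fin n → ℝ) (hx : StrictAnti x)
    (f : ℝ → ℝ) (hf_cont : Continuous f) (hf_pos : ∀ t, 0 < f t)
    (hf_int : ∫ t, f t = 1) :
    StrictMonoOn
      (fun θ : ℝ =>
        ((Measure.pi fun _ : Fin n =>
            volume.withDensity fun t => ENNReal.ofReal (f t))
          {ε : Fin n → ℝ | ∀ i : Fin n,
            x i + ε i / θ ≤ x ⟨0, by omega⟩ + ε ⟨0, by omega⟩ / θ}).toReal)
      (Set.Ioi (0 : ℝ)) := by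
  have hfi : Integrable f := by
    by_contra h
    rw [integral_undef h] at hf_int
    norm_num at hf_int
  set ν : Measure ℝ := volume.withDensity fun t => ENNReal.ofReal (f t) with hν
  haveI hνfin : IsFiniteMeasure ν := by
    constructor
    rw [hν, withDensity_apply _ MeasurableSet.univ, Measure.restrict_univ,
      ← ofReal_integral_eq_lintegral_ofReal hfi (Filter.Eventually.of_forall fun t => (hf_pos t).le),
      hf_int, ENNReal.ofReal_one]
    exact ENNReal.one_lt_top
  have hIoo : ∀ a b : ℝ, a < b → 0 < ν (Set.Ioo a b) := by
    intro a b hab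
    rw [hν, withDensity_apply _ measurableSet_Ioo,
      lintegral_pos_iff_support hf_cont.measurable.ennreal_ofReal]
    have hsupp : Function.support (fun t => ENNReal.ofReal (f t)) = Set.univ := by
      ext t
      simp [Function.support, ENNReal.ofReal_eq_zero, not_le, hf_pos t]
    rw [hsupp, Measure.restrict_apply_univ, Real.volume_Ioo]
    exact ENNReal.ofReal_pos.2 (by linarith)
  set μ : Measure (Fin n → ℝ) := Measure.pi fun _ : Fin n => ν with hμ
  set i0 : Fin n := ⟨0, by omega⟩ with hi0
  set i1 : Fin n := ⟨1, by omega⟩ with hi1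
  have hne10 : i1 ≠ i0 := by simp [hi0, hi1, Fin.ext_iff]
  set d : Fin n → ℝ := fun i => x i0 - x i with hd
  have hd0 : d i0 = 0 := by simp [hd]
  have hdpos : ∀ i : Fin n, i ≠ i0 → 0 < d i := by
    intro i hi
    have h0i : i0 < i := by
      have hv : (0 : ℕ) < i.val :=
        Nat.pos_of_ne_zero fun h => hi (Fin.ext (by simp [hi0, h]))
      simpa [Fin.lt_def, hi0] using hv
    simpa [hd] using sub_pos.2 (hx h0i)
  have hdnn : ∀ i : Fin n, 0 ≤ d i := by
    intro i
    rcases eq_or_ne i i0 with h | h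
    · simp [h, hd0]
    · exact (hdpos i h).le
  -- the event as a set
  set S : ℝ → Set (Fin n → ℝ) :=
    fun θ => {ε : Fin n → ℝ | ∀ i : Fin n, x i + ε i / θ ≤ x i0 + ε i0 / θ} with hS
  have hSmem : ∀ θ : ℝ, 0 < θ → ∀ ε : Fin n → ℝ,
      ε ∈ S θ ↔ ∀ i : Fin n, ε i - ε i0 ≤ θ * d i := by
    intro θ hθ ε
    constructor
    · intro h i; exact (stmt15_cond_iff θ (x i) (x i0) (ε i) (ε i0) hθ).1 (h i)
    · intro h i; exact (stmt15_cond_iff θ (x i) (x i0) (ε i) (ε i0) hθ).2 (h i)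
  intro θ1 hθ1 θ2 hθ2 h12
  simp only [Set.mem_Ioi] at hθ1 hθ2
  -- the minimum gap
  have hT : (Finset.univ.erase i0).Nonempty :=
    ⟨i1, Finset.mem_erase.2 ⟨hne10, Finset.mem_univ _⟩⟩
  set m : ℝ := Finset.inf' _ hT d with hm
  have hmpos : 0 < m := by
    rw [hm, Finset.lt_inf'_iff]
    intro i hi
    exact hdpos i (Finset.mem_erase.1 hi).1
  have hmle : ∀ i : Fin n, i ≠ i0 → m ≤ d i := by
    intro i hi
    exact Finset.inf'_le d (Finset.mem_erase.2 ⟨hi, Finset.mem_univ _⟩)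
  set η : ℝ := (θ2 - θ1) * m / 4 with hη
  have hηpos : 0 < η := div_pos (mul_pos (by linarith) hmpos) (by norm_num)
  set c : Fin n → ℝ := fun i => (θ1 + θ2) / 2 * d i with hc
  set B : Set (Fin n → ℝ) := Set.univ.pi fun i => Set.Ioo (c i - η) (c i + η) with hB
  have hBmeas : MeasurableSet B :=
    MeasurableSet.univ_pi fun i => measurableSet_Ioo
  have key : ∀ i : Fin n, i ≠ i0 → ∀ ε : Fin n → ℝ, ε ∈ B →
      θ1 * d i < ε i - ε i0 ∧ ε i - ε i0 < θ2 * d i := by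
    intro i hi ε hε
    have hεi := (Set.mem_univ_pi.1 hε) i
    have hε0 := (Set.mem_univ_pi.1 hε) i0
    have hc0 : c i0 = 0 := by simp [hc, hd0]
    rw [hc0] at hε0
    rw [Set.mem_Ioo] at hεi hε0
    obtain ⟨hA, hBB⟩ := hεi
    obtain ⟨hC, hD⟩ := hε0
    clear_value η m
    set D : ℝ := d i with hD2
    clear_value D
    have hmd := hmle i hi
    have hmul : (θ2 - θ1) / 2 * m ≤ (θ2 - θ1) / 2 * d i :=
      mul_le_mul_of_nonneg_left hmd (by linarith)
    simp only [hc, ← hD2] at hA hBB hmul ⊢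
    constructor
    · nlinarith [hA, hBB, hC, hD, hmul, hη]
    · nlinarith [hA, hBB, hC, hD, hmul, hη]
  -- B is disjoint from S θ1
  have hdisj : Disjoint (S θ1) B := by
    rw [Set.disjoint_left]
    intro ε hεS hεB
    have h1 := ((hSmem θ1 hθ1 ε).1 hεS) i1
    have h2 := (key i1 hne10 ε hεB).1
    linarith
  -- S θ1 ∪ B ⊆ S θ2
  have hsub : S θ1 ∪ B ⊆ S θ2 := by
    intro ε hε
    rw [hSmem θ2 hθ2 ε]
    rcases hε with hε | hε
    · intro i
      have := ((hSmem θ1 hθ1 ε).1 hε) i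
      have h2 : θ1 * d i ≤ θ2 * d i :=
        mul_le_mul_of_nonneg_right h12.le (hdnn i)
      linarith
    · intro i
      rcases eq_or_ne i i0 with h | h
      · subst h; simp [hd0]
      · exact (key i h ε hε).2.le
  -- positivity of μ B
  have hBpos : 0 < μ B := by
    rw [hμ, hB, Measure.pi_pi]
    rw [CanonicallyOrderedAdd.prod_pos]
    intro i _
    exact hIoo _ _ (by linarith)
  haveI : IsFiniteMeasure μ := by rw [hμ]; infer_instance
  -- measure comparison
  have hle : μ (S θ1) + μ B ≤ μ (S θ2) := by
    rw [← measure_union hdisj hBmeas]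
    exact measure_mono hsub
  have hfin1 : μ (S θ1) ≠ ⊤ := measure_ne_top _ _
  have hfin2 : μ (S θ2) ≠ ⊤ := measure_ne_top _ _
  have hlt : μ (S θ1) < μ (S θ2) :=
    lt_of_lt_of_le (ENNReal.lt_add_right hfin1 hBpos.ne') hle
  exact ENNReal.toReal_lt_toReal hfin1 hfin2 |>.2 hlt
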